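/- Let P, Q, n be integers with P ≥ 1, Q ≥ 6, gcd(P,Q) = 1 and n ≥ 1, and suppose p := Qn + P is prime. For m ≥ 1 define C_m := (144Q)^{−m}·∏_{k=0}^{m−1} (12Qk + Q + 6P)(12Qk + 5Q + 6P) / ((Qk + Q + P)(k+1)) ∈ ℚ. Then for every m with 1 ≤ m ≤ n − 1, the p-adic valuation of C_m is nonnegative (i.e., C_m is a p-adic integer). -/

import Mathlib

-- aux: product of terms with nonneg valuation
lemma padicValRat_prod_nonneg (p : ℕ) [hf : Fact p.Prime] (s : Finset ℕ) (f : ℕ → ℚ)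
    (h : ∀ k ∈ s, f k ≠ 0 ∧ 0 ≤ padicValRat p (f k)) :
    0 ≤ padicValRat p (∏ k ∈ s, f k) := by
  classical
  induction s using Finset.induction with
  | empty => simp [padicValRat.one]
  | @insert a t hx ih =>
    rw [Finset.prod_insert hx]
    have h1 := h a (Finset.mem_insert_self a t)
    have h2 : ∀ k ∈ t, f k ≠ 0 ∧ 0 ≤ padicValRat p (f k) := fun k hk =>
      h k (Finset.mem_insert_of_mem hk)
    have hne : ∏ k ∈ t, f k ≠ 0 := Finset.prod_ne_zero_iff.mpr (fun k hk => (h2 k hk).1)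
    rw [padicValRat.mul h1.1 hne]
    exact add_nonneg h1.2 (ih h2)

lemma padicValRat_int_cast_nonneg (p : ℕ) [hf : Fact p.Prime] (z : ℤ) :
    0 ≤ padicValRat p ((z : ℚ)) := by
  rw [padicValRat.of_int]
  positivity

lemma padicValRat_int_cast_eq_zero (p : ℕ) [hf : Fact p.Prime] (z : ℤ)
    (h : ¬ (p : ℤ) ∣ z) : padicValRat p ((z : ℚ)) = 0 := by
  rw [padicValRat.of_int, padicValInt.eq_zero_of_not_dvd h]
  simp

theorem padicValRat_Cm_nonneg (P Q : ℤ) (n : ℕ) (hP : 1 ≤ P) (hQ : 6 ≤ Q)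
    (hPQ : Int.gcd P Q = 1) (hn : 1 ≤ n)
    (p : ℕ) (hp : p.Prime) (hpeq : (p : ℤ) = Q * (n : ℤ) + P) :
    ∀ m : ℕ, 1 ≤ m → m ≤ n - 1 →
      0 ≤ padicValRat p
          (((144 * (Q : ℚ))⁻¹) ^ m *
            ∏ k ∈ Finset.range m,
              ((12 * (Q : ℚ) * (k : ℚ) + (Q : ℚ) + 6 * (P : ℚ)) *
                  (12 * (Q : ℚ) * (k : ℚ) + 5 * (Q : ℚ) + 6 * (P : ℚ))) /
                (((Q : ℚ) * (k : ℚ) + (Q : ℚ) + (P : ℚ)) * ((k : ℚ) + 1))) := by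
  haveI : Fact p.Prime := ⟨hp⟩
  intro m hm1 hm2
  have hn' : (1 : ℤ) ≤ (n : ℤ) := by exact_mod_cast hn
  have hp7 : (7 : ℤ) ≤ (p : ℤ) := by nlinarith
  -- p does not divide Q
  have hpQ : ¬ (p : ℤ) ∣ Q := by
    intro h
    have hpP : (p : ℤ) ∣ P := by
      have : P = (p : ℤ) - Q * n := by linarith
      rw [this]; exact dvd_sub dvd_rfl (h.mul_right _)
    have : (p : ℤ) ∣ (Int.gcd P Q : ℤ) := Int.dvd_coe_gcd hpP h
    rw [hPQ] at this
    have := Int.le_of_dvd (by norm_num) this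
    push_cast at this
    linarith
  -- p does not divide 144
  have hp144 : ¬ (p : ℤ) ∣ 144 := by
    intro h
    have h' : p ∣ 144 := by exact_mod_cast h
    have : p ∣ 2 ^ 4 * 3 ^ 2 := by norm_num; exact h'
    rcases (Nat.Prime.dvd_mul hp).1 this with h2 | h3
    · have := (Nat.prime_dvd_prime_iff_eq hp Nat.prime_two).mp (hp.dvd_of_dvd_pow h2)
      omega
    · have := (Nat.prime_dvd_prime_iff_eq hp Nat.prime_three).mp (hp.dvd_of_dvd_pow h3)
      omega
  have hmn : m + 1 ≤ n := by omega
  have hQq : (6:ℚ) ≤ (Q:ℚ) := by exact_mod_cast hQ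
  have hPq : (1:ℚ) ≤ (P:ℚ) := by exact_mod_cast hP
  -- valuation of 144 * Q is zero
  have h144Q : padicValRat p (144 * (Q:ℚ)) = 0 := by
    have he : (144 * (Q:ℚ)) = ((144 * Q : ℤ) : ℚ) := by push_cast; ring
    rw [he, padicValRat_int_cast_eq_zero]
    intro h
    rcases (Nat.prime_iff_prime_int.1 hp).2.2 144 Q h with h1 | h2
    · exact hp144 h1
    · exact hpQ h2
  have h144Qne : (144 * (Q:ℚ)) ≠ 0 := by nlinarith
  have hinvne : ((144 * (Q:ℚ))⁻¹) ^ m ≠ 0 := pow_ne_zero _ (inv_ne_zero h144Qne)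
  have hinv0 : padicValRat p (((144 * (Q:ℚ))⁻¹) ^ m) = 0 := by
    rw [padicValRat.pow _, padicValRat.inv, h144Q]
    simp
  -- per-term facts
  have hterm : ∀ k ∈ Finset.range m,
      (((12 * (Q : ℚ) * (k : ℚ) + (Q : ℚ) + 6 * (P : ℚ)) *
          (12 * (Q : ℚ) * (k : ℚ) + 5 * (Q : ℚ) + 6 * (P : ℚ))) /
        (((Q : ℚ) * (k : ℚ) + (Q : ℚ) + (P : ℚ)) * ((k : ℚ) + 1))) ≠ 0 ∧
      0 ≤ padicValRat p
        (((12 * (Q : ℚ) * (k : ℚ) + (Q : ℚ) + 6 * (P : ℚ)) *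
            (12 * (Q : ℚ) * (k : ℚ) + 5 * (Q : ℚ) + 6 * (P : ℚ))) /
          (((Q : ℚ) * (k : ℚ) + (Q : ℚ) + (P : ℚ)) * ((k : ℚ) + 1))) := by
    intro k hk
    have hkm : k < m := Finset.mem_range.mp hk
    have hkq : (0:ℚ) ≤ (k:ℚ) := Nat.cast_nonneg k
    have hkz : (0:ℤ) ≤ (k:ℤ) := Nat.cast_nonneg k
    have hQk : (0:ℚ) ≤ 12 * (Q:ℚ) * (k:ℚ) :=
      mul_nonneg (mul_nonneg (by norm_num) (by linarith)) hkq
    have hA : (0:ℚ) < 12 * (Q:ℚ) * (k:ℚ) + (Q:ℚ) + 6 * (P:ℚ) := by linarith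
    have hB : (0:ℚ) < 12 * (Q:ℚ) * (k:ℚ) + 5 * (Q:ℚ) + 6 * (P:ℚ) := by linarith
    have hCq : (0:ℚ) < (Q:ℚ) * (k:ℚ) + (Q:ℚ) + (P:ℚ) := by nlinarith
    have hDq : (0:ℚ) < (k:ℚ) + 1 := by linarith
    have hk1 : (k:ℤ) + 1 ≤ (n:ℤ) - 1 := by omega
    -- p does not divide the denominator factors
    have hCpos : (0:ℤ) < Q * (k:ℤ) + Q + P := by nlinarith
    have hCltp : Q * (k:ℤ) + Q + P < (p:ℤ) := by
      nlinarith [mul_le_mul_of_nonneg_left hk1 (show (0:ℤ) ≤ Q by linarith)]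
    have hpC : ¬ (p:ℤ) ∣ (Q * (k:ℤ) + Q + P) := fun h =>
      absurd (Int.le_of_dvd hCpos h) (by linarith)
    have hkltp : (k:ℤ) + 1 < (p:ℤ) := by
      nlinarith [mul_le_mul_of_nonneg_right hQ (show (0:ℤ) ≤ (n:ℤ) by positivity)]
    have hpk : ¬ (p:ℤ) ∣ ((k:ℤ) + 1) := fun h =>
      absurd (Int.le_of_dvd (by linarith) h) (by linarith)
    constructor
    · exact div_ne_zero (mul_ne_zero hA.ne' hB.ne') (mul_ne_zero hCq.ne' hDq.ne')
    · have heq : (((12 * (Q : ℚ) * (k : ℚ) + (Q : ℚ) + 6 * (P : ℚ)) *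
            (12 * (Q : ℚ) * (k : ℚ) + 5 * (Q : ℚ) + 6 * (P : ℚ))) /
          (((Q : ℚ) * (k : ℚ) + (Q : ℚ) + (P : ℚ)) * ((k : ℚ) + 1))) =
          (((12 * Q * (k:ℤ) + Q + 6 * P : ℤ) : ℚ) * ((12 * Q * (k:ℤ) + 5 * Q + 6 * P : ℤ) : ℚ)) /
          (((Q * (k:ℤ) + Q + P : ℤ) : ℚ) * (((k:ℤ) + 1 : ℤ) : ℚ)) := by
        push_cast; ring
      have hAne : ((12 * Q * (k:ℤ) + Q + 6 * P : ℤ) : ℚ) ≠ 0 := by push_cast; exact hA.ne'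
      have hBne : ((12 * Q * (k:ℤ) + 5 * Q + 6 * P : ℤ) : ℚ) ≠ 0 := by push_cast; exact hB.ne'
      have hCne : ((Q * (k:ℤ) + Q + P : ℤ) : ℚ) ≠ 0 := by push_cast; exact hCq.ne'
      have hDne : (((k:ℤ) + 1 : ℤ) : ℚ) ≠ 0 := by push_cast; exact hDq.ne'
      rw [heq, padicValRat.div (mul_ne_zero hAne hBne) (mul_ne_zero hCne hDne),
        padicValRat.mul hAne hBne, padicValRat.mul hCne hDne,
        padicValRat_int_cast_eq_zero p _ hpC, padicValRat_int_cast_eq_zero p _ hpk]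
      have := padicValRat_int_cast_nonneg p (12 * Q * (k:ℤ) + Q + 6 * P)
      have := padicValRat_int_cast_nonneg p (12 * Q * (k:ℤ) + 5 * Q + 6 * P)
      linarith
  have hprodne : (∏ k ∈ Finset.range m,
      ((12 * (Q : ℚ) * (k : ℚ) + (Q : ℚ) + 6 * (P : ℚ)) *
          (12 * (Q : ℚ) * (k : ℚ) + 5 * (Q : ℚ) + 6 * (P : ℚ))) /
        (((Q : ℚ) * (k : ℚ) + (Q : ℚ) + (P : ℚ)) * ((k : ℚ) + 1))) ≠ 0 :=
    Finset.prod_ne_zero_iff.mpr (fun k hk => (hterm k hk).1)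
  have hprod := padicValRat_prod_nonneg p (Finset.range m) _ hterm
  rw [padicValRat.mul hinvne hprodne, hinv0]
  linarith
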